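/- (Second bias term in E[σ̂²].) Let U₁,…,Uₙ be i.i.d. pairs Uᵢ = (Xᵢ,Yᵢ) with Xᵢ ~ P, Yᵢ ~ Q, and n ≥ 4. Then | (1/n⁴) Σ_{i,j,a,b=1}^n E[H*ᵢⱼ H*ₐᵦ] − (E[H*₁₂])² | ≤ 18 ν² (6/n − 11/n² + 6/n³). -/

import Mathlib

open MeasureTheory ProbabilityTheory Filter Finset

/-- `Hstar k (x,y) (x',y') = k(x,x') - k(x,y') - k(y,x')`. -/
noncomputable def Hstar {𝒳 : Type*} (k : 𝒳 → 𝒳 → ℝ) (u v : 𝒳 × 𝒳) : ℝ :=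
  k u.1 v.1 - k u.1 v.2 - k u.2 v.1

lemma card_distinct4 (n : ℕ) :
    ((Finset.univ : Finset (Fin n × Fin n × Fin n × Fin n)).filter fun q =>
      q.1 ≠ q.2.1 ∧ q.1 ≠ q.2.2.1 ∧ q.1 ≠ q.2.2.2 ∧ q.2.1 ≠ q.2.2.1 ∧
        q.2.1 ≠ q.2.2.2 ∧ q.2.2.1 ≠ q.2.2.2).card
    = n * (n-1) * (n-2) * (n-3) := by
  classical
  rw [← Fintype.card_subtype]
  have e : {q : Fin n × Fin n × Fin n × Fin n //
      q.1 ≠ q.2.1 ∧ q.1 ≠ q.2.2.1 ∧ q.1 ≠ q.2.2.2 ∧ q.2.1 ≠ q.2.2.1 ∧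
        q.2.1 ≠ q.2.2.2 ∧ q.2.2.1 ≠ q.2.2.2} ≃ (Fin 4 ↪ Fin n) :=
    { toFun := fun q => ⟨![q.1.1, q.1.2.1, q.1.2.2.1, q.1.2.2.2], by
        obtain ⟨⟨i, j, a, b⟩, h1, h2, h3, h4, h5, h6⟩ := q
        simp only [ne_eq] at h1 h2 h3 h4 h5 h6
        intro x y hxy
        fin_cases x <;> fin_cases y <;> simp_all [eq_comm]⟩
      invFun := fun f => ⟨(f 0, f 1, f 2, f 3),
        ⟨f.injective.ne (by decide), f.injective.ne (by decide), f.injective.ne (by decide),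
         f.injective.ne (by decide), f.injective.ne (by decide), f.injective.ne (by decide)⟩⟩
      left_inv := fun q => by
        obtain ⟨⟨i, j, a, b⟩, h⟩ := q
        rfl
      right_inv := fun f => by
        ext x
        fin_cases x <;> rfl }
  rw [Fintype.card_congr e, Fintype.card_embedding_eq, Fintype.card_fin, Fintype.card_fin]
  show n.descFactorial 4 = _
  simp [Nat.descFactorial]
  ring

/-- Second bias term in `E[σ̂²]`:
`|(1/n⁴) ∑_{i,j,a,b} E[H*ᵢⱼ H*ₐᵦ] − (E[H*₁₂])²| ≤ 18ν² (6/n − 11/n² + 6/n³)`,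
where `E[H*₁₂]` is the expectation over two i.i.d. pairs with common law `m`,
written as an iterated integral. -/
theorem second_bias_term {𝒳 Ω₀ : Type*} [MeasurableSpace 𝒳] [MeasurableSpace Ω₀]
    (μ : Measure Ω₀) [IsProbabilityMeasure μ]
    (P Q : Measure 𝒳) [IsProbabilityMeasure P] [IsProbabilityMeasure Q]
    (m : Measure (𝒳 × 𝒳)) [IsProbabilityMeasure m]
    (k : 𝒳 → 𝒳 → ℝ) (ν : ℝ)
    (hk : Measurable (Function.uncurry k))
    (hsymm : ∀ x x', k x x' = k x' x)
    (hbound : ∀ x x', |k x x'| ≤ ν)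
    (n : ℕ) (hn : 4 ≤ n)
    (U : Fin n → Ω₀ → 𝒳 × 𝒳)
    (hU : ∀ i, Measurable (U i))
    (hindep : iIndepFun U μ)
    (hlaw : ∀ i, Measure.map (U i) μ = m)
    (hmP : m.map Prod.fst = P) (hmQ : m.map Prod.snd = Q) :
    |(1 / (n : ℝ) ^ 4) *
        (∑ i : Fin n, ∑ j : Fin n, ∑ a : Fin n, ∑ b : Fin n,
          ∫ ω, Hstar k (U i ω) (U j ω) * Hstar k (U a ω) (U b ω) ∂μ) -
        (∫ u, (∫ v, Hstar k u v ∂m) ∂m) ^ 2| ≤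
      18 * ν ^ 2 * (6 / (n : ℝ) - 11 / (n : ℝ) ^ 2 + 6 / (n : ℝ) ^ 3) := by
  classical
  have hn0 : (0:ℝ) < (n:ℝ) := by
    have : 0 < n := by omega
    exact_mod_cast this
  obtain ⟨x0⟩ : Nonempty 𝒳 := by
    by_contra h
    rw [not_nonempty_iff] at h
    have h1 := measure_univ (μ := P)
    rw [Set.univ_eq_empty_iff.mpr h, measure_empty] at h1
    exact zero_ne_one h1
  have hν : 0 ≤ ν := le_trans (abs_nonneg _) (hbound x0 x0)
  -- measurability of the uncurried `Hstar`
  have hHmeas : Measurable fun p : (𝒳 × 𝒳) × 𝒳 × 𝒳 => Hstar k p.1 p.2 := by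
    have h1 : Measurable fun p : (𝒳 × 𝒳) × 𝒳 × 𝒳 => k p.1.1 p.2.1 :=
      hk.comp (measurable_fst.fst.prodMk measurable_snd.fst)
    have h2 : Measurable fun p : (𝒳 × 𝒳) × 𝒳 × 𝒳 => k p.1.1 p.2.2 :=
      hk.comp (measurable_fst.fst.prodMk measurable_snd.snd)
    have h3 : Measurable fun p : (𝒳 × 𝒳) × 𝒳 × 𝒳 => k p.1.2 p.2.1 :=
      hk.comp (measurable_fst.snd.prodMk measurable_snd.fst)
    exact (h1.sub h2).sub h3
  -- pointwise bound on `Hstar`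
  have hHbd : ∀ u v : 𝒳 × 𝒳, |Hstar k u v| ≤ 3 * ν := by
    intro u v
    have h1 := abs_le.mp (hbound u.1 v.1)
    have h2 := abs_le.mp (hbound u.1 v.2)
    have h3 := abs_le.mp (hbound u.2 v.1)
    rw [show Hstar k u v = k u.1 v.1 - k u.1 v.2 - k u.2 v.1 from rfl, abs_le]
    constructor <;> [linarith [h1.1, h2.2, h3.2]; linarith [h1.2, h2.1, h3.1]]
  set E : ℝ := ∫ u, (∫ v, Hstar k u v ∂m) ∂m with hEdef
  -- integrability
  have intH : ∀ i j : Fin n, Integrable (fun ω => Hstar k (U i ω) (U j ω)) μ := by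
    intro i j
    refine (integrable_const (3 * ν)).mono'
      ((hHmeas.comp ((hU i).prodMk (hU j))).aestronglyMeasurable)
      (Filter.Eventually.of_forall fun ω => ?_)
    rw [Real.norm_eq_abs]
    exact hHbd _ _
  have intProd : Integrable (fun p : (𝒳 × 𝒳) × 𝒳 × 𝒳 => Hstar k p.1 p.2) (m.prod m) := by
    refine (integrable_const (3 * ν)).mono' hHmeas.aestronglyMeasurable
      (Filter.Eventually.of_forall fun p => ?_)
    rw [Real.norm_eq_abs]
    exact hHbd _ _
  -- for distinct indices, the expectation of `Hstar (U i) (U j)` is `E`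
  have EH : ∀ i j : Fin n, i ≠ j → (∫ ω, Hstar k (U i ω) (U j ω) ∂μ) = E := by
    intro i j hij
    have hmap : μ.map (fun ω => (U i ω, U j ω)) = m.prod m := by
      have h := hindep.indepFun hij
      rw [indepFun_iff_map_prod_eq_prod_map_map (hU i).aemeasurable (hU j).aemeasurable] at h
      rw [h, hlaw i, hlaw j]
    calc ∫ ω, Hstar k (U i ω) (U j ω) ∂μ
        = ∫ p, Hstar k p.1 p.2 ∂(μ.map (fun ω => (U i ω, U j ω))) :=
          (integral_map ((hU i).prodMk (hU j)).aemeasurable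
            hHmeas.aestronglyMeasurable).symm
      _ = ∫ p, Hstar k p.1 p.2 ∂(m.prod m) := by rw [hmap]
      _ = E := MeasureTheory.integral_prod _ intProd
  -- bound on `E`
  have hEbd : |E| ≤ 3 * ν := by
    rw [← Real.norm_eq_abs]
    calc ‖E‖ ≤ 3 * ν * (m Set.univ).toReal := by
          refine norm_integral_le_of_norm_le_const
            (Filter.Eventually.of_forall fun u => ?_)
          rw [Real.norm_eq_abs]
          calc |∫ v, Hstar k u v ∂m| = ‖∫ v, Hstar k u v ∂m‖ := (Real.norm_eq_abs _).symm
            _ ≤ 3 * ν * (m Set.univ).toReal := norm_integral_le_of_norm_le_const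
                (Filter.Eventually.of_forall fun v => by
                  rw [Real.norm_eq_abs]; exact hHbd u v)
            _ = 3 * ν := by simp
      _ = 3 * ν := by simp
  -- quadruple-indexed expectation
  set F : Fin n × Fin n × Fin n × Fin n → ℝ := fun q =>
    ∫ ω, Hstar k (U q.1 ω) (U q.2.1 ω) * Hstar k (U q.2.2.1 ω) (U q.2.2.2 ω) ∂μ with hFdef
  have hFbd : ∀ q, |F q| ≤ 9 * ν ^ 2 := by
    intro q
    rw [← Real.norm_eq_abs]
    calc ‖F q‖ ≤ 9 * ν ^ 2 * (μ Set.univ).toReal := by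
          refine norm_integral_le_of_norm_le_const
            (Filter.Eventually.of_forall fun ω => ?_)
          rw [Real.norm_eq_abs, abs_mul]
          calc |Hstar k (U q.1 ω) (U q.2.1 ω)| * |Hstar k (U q.2.2.1 ω) (U q.2.2.2 ω)|
              ≤ (3 * ν) * (3 * ν) :=
                mul_le_mul (hHbd _ _) (hHbd _ _) (abs_nonneg _) (by positivity)
            _ = 9 * ν ^ 2 := by ring
      _ = 9 * ν ^ 2 := by simp
  have key : ∀ q : Fin n × Fin n × Fin n × Fin n,
      (q.1 ≠ q.2.1 ∧ q.1 ≠ q.2.2.1 ∧ q.1 ≠ q.2.2.2 ∧ q.2.1 ≠ q.2.2.1 ∧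
        q.2.1 ≠ q.2.2.2 ∧ q.2.2.1 ≠ q.2.2.2) → F q = E ^ 2 := by
    rintro ⟨i, j, a, b⟩ ⟨hij, hia, hib, hja, hjb, hab⟩
    have hInd : IndepFun (fun ω => (U i ω, U j ω)) (fun ω => (U a ω, U b ω)) μ :=
      hindep.indepFun_prodMk_prodMk hU i j a b hia hib hja hjb
    have hInd2 : IndepFun (fun ω => Hstar k (U i ω) (U j ω))
        (fun ω => Hstar k (U a ω) (U b ω)) μ := hInd.comp hHmeas hHmeas
    have h2 : (∫ ω, Hstar k (U i ω) (U j ω) * Hstar k (U a ω) (U b ω) ∂μ)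
        = (∫ ω, Hstar k (U i ω) (U j ω) ∂μ) * (∫ ω, Hstar k (U a ω) (U b ω) ∂μ) :=
      hInd2.integral_fun_mul_eq_mul_integral (intH i j).aestronglyMeasurable (intH a b).aestronglyMeasurable
    show (∫ ω, Hstar k (U i ω) (U j ω) * Hstar k (U a ω) (U b ω) ∂μ) = E ^ 2
    rw [h2, EH i j hij, EH a b hab, sq]
  have hdev : ∀ q, |F q - E ^ 2| ≤ 18 * ν ^ 2 := by
    intro q
    have h1 : |E ^ 2| ≤ 9 * ν ^ 2 := by
      rw [abs_pow]
      calc |E| ^ 2 ≤ (3 * ν) ^ 2 := pow_le_pow_left₀ (abs_nonneg _) hEbd 2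
        _ = 9 * ν ^ 2 := by ring
    calc |F q - E ^ 2| ≤ |F q| + |E ^ 2| := abs_sub _ _
      _ ≤ 9 * ν ^ 2 + 9 * ν ^ 2 := add_le_add (hFbd q) h1
      _ = 18 * ν ^ 2 := by ring
  -- rewrite quadruple sums as a sum over the product type
  have hsum : (∑ q : Fin n × Fin n × Fin n × Fin n, F q)
      = ∑ i : Fin n, ∑ j : Fin n, ∑ a : Fin n, ∑ b : Fin n,
          ∫ ω, Hstar k (U i ω) (U j ω) * Hstar k (U a ω) (U b ω) ∂μ := by
    rw [Fintype.sum_prod_type]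
    refine Finset.sum_congr rfl fun i _ => ?_
    rw [Fintype.sum_prod_type]
    refine Finset.sum_congr rfl fun j _ => ?_
    rw [Fintype.sum_prod_type]
  rw [← hsum]
  -- counting
  set p : Fin n × Fin n × Fin n × Fin n → Prop := fun q =>
    q.1 ≠ q.2.1 ∧ q.1 ≠ q.2.2.1 ∧ q.1 ≠ q.2.2.2 ∧ q.2.1 ≠ q.2.2.1 ∧
      q.2.1 ≠ q.2.2.2 ∧ q.2.2.1 ≠ q.2.2.2 with hpdef
  have cardQ : (Finset.univ : Finset (Fin n × Fin n × Fin n × Fin n)).card = n ^ 4 := by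
    simp [Finset.card_univ]
    ring
  have cardp : (Finset.univ.filter p).card = n * (n-1) * (n-2) * (n-3) := card_distinct4 n
  have cardnp : (Finset.univ.filter fun q => ¬ p q).card
      = n ^ 4 - n * (n-1) * (n-2) * (n-3) := by
    have h := Finset.card_filter_add_card_filter_not
      (s := (Finset.univ : Finset (Fin n × Fin n × Fin n × Fin n))) (p := p)
    rw [cardQ, cardp] at h
    omega
  have cardle : n * (n-1) * (n-2) * (n-3) ≤ n ^ 4 := by
    calc n * (n-1) * (n-2) * (n-3) ≤ n * n * n * n := by
          have h1 : n - 1 ≤ n := Nat.sub_le _ _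
          have h2 : n - 2 ≤ n := Nat.sub_le _ _
          have h3 : n - 3 ≤ n := Nat.sub_le _ _
          exact Nat.mul_le_mul (Nat.mul_le_mul (Nat.mul_le_mul_left _ h1) h2) h3
      _ = n ^ 4 := by ring
  have hcast : ((n ^ 4 - n * (n-1) * (n-2) * (n-3) : ℕ) : ℝ)
      = (n:ℝ)^4 - (n:ℝ) * ((n:ℝ)-1) * ((n:ℝ)-2) * ((n:ℝ)-3) := by
    rw [Nat.cast_sub cardle]
    have c1 : ((n - 1 : ℕ) : ℝ) = (n:ℝ) - 1 := by
      rw [Nat.cast_sub (by omega)]; norm_num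
    have c2 : ((n - 2 : ℕ) : ℝ) = (n:ℝ) - 2 := by
      rw [Nat.cast_sub (by omega)]; norm_num
    have c3 : ((n - 3 : ℕ) : ℝ) = (n:ℝ) - 3 := by
      rw [Nat.cast_sub (by omega)]; norm_num
    push_cast [c1, c2, c3]
    ring
  -- the deviation sum
  have hsplit : (∑ q : Fin n × Fin n × Fin n × Fin n, (F q - E ^ 2))
      = ∑ q ∈ Finset.univ.filter fun q => ¬ p q, (F q - E ^ 2) := by
    rw [← Finset.sum_filter_add_sum_filter_not Finset.univ p (fun q => F q - E ^ 2)]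
    have : (∑ q ∈ Finset.univ.filter p, (F q - E ^ 2)) = 0 :=
      Finset.sum_eq_zero fun q hq => by
        rw [key q (Finset.mem_filter.mp hq).2]; ring
    rw [this, zero_add]
  have hdevsum : |∑ q : Fin n × Fin n × Fin n × Fin n, (F q - E ^ 2)|
      ≤ ((n ^ 4 - n * (n-1) * (n-2) * (n-3) : ℕ) : ℝ) * (18 * ν ^ 2) := by
    rw [hsplit]
    calc |∑ q ∈ Finset.univ.filter fun q => ¬ p q, (F q - E ^ 2)|
        ≤ ∑ q ∈ Finset.univ.filter fun q => ¬ p q, |F q - E ^ 2| :=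
          Finset.abs_sum_le_sum_abs _ _
      _ ≤ (Finset.univ.filter fun q => ¬ p q).card • (18 * ν ^ 2) :=
          Finset.sum_le_card_nsmul _ _ _ fun q _ => hdev q
      _ = ((n ^ 4 - n * (n-1) * (n-2) * (n-3) : ℕ) : ℝ) * (18 * ν ^ 2) := by
          rw [cardnp, nsmul_eq_mul]
  -- put everything together
  have hrw : (1 / (n:ℝ)^4) * (∑ q : Fin n × Fin n × Fin n × Fin n, F q) - E ^ 2
      = (1 / (n:ℝ)^4) * (∑ q : Fin n × Fin n × Fin n × Fin n, (F q - E ^ 2)) := by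
    rw [Finset.sum_sub_distrib, Finset.sum_const, cardQ, nsmul_eq_mul]
    push_cast
    field_simp
  rw [hrw, abs_mul]
  have habs : |1 / (n:ℝ)^4| = 1 / (n:ℝ)^4 := abs_of_pos (by positivity)
  rw [habs]
  calc (1 / (n:ℝ)^4) * |∑ q : Fin n × Fin n × Fin n × Fin n, (F q - E ^ 2)|
      ≤ (1 / (n:ℝ)^4) * (((n ^ 4 - n * (n-1) * (n-2) * (n-3) : ℕ) : ℝ) * (18 * ν ^ 2)) :=
        mul_le_mul_of_nonneg_left hdevsum (by positivity)
    _ = 18 * ν ^ 2 * (6 / (n : ℝ) - 11 / (n : ℝ) ^ 2 + 6 / (n : ℝ) ^ 3) := by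
        rw [hcast]
        field_simp
        ring
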